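/- Let ℓ > 0, k > 1, and r = min{i ∈ [0,ℓ] : k^(ℓ−i) ≤ 2^(k^i) − 1}. Then ⌊log_k ℓ⌋ ≤ r ≤ ⌊log_k ℓ⌋ + 2. -/

import Mathlib

theorem stmt1 (k ℓ : ℕ) (hk : 2 ≤ k) (hℓ : 1 ≤ ℓ)
    (r : ℕ) (hr : r = sInf {i | i ≤ ℓ ∧ k ^ (ℓ - i) ≤ 2 ^ (k ^ i) - 1}) :
    Nat.log k ℓ ≤ r ∧ r ≤ Nat.log k ℓ + 2 := by
  set L := Nat.log k ℓ with hL
  have hℓmem : ℓ ∈ {i | i ≤ ℓ ∧ k ^ (ℓ - i) ≤ 2 ^ (k ^ i) - 1} := by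
    refine ⟨le_rfl, ?_⟩
    simp only [Nat.sub_self, pow_zero]
    have h2 : 2 ≤ 2 ^ (k ^ ℓ) := by
      calc 2 = 2 ^ 1 := rfl
        _ ≤ 2 ^ (k ^ ℓ) := Nat.pow_le_pow_right (by norm_num)
            (Nat.one_le_pow _ _ (by omega))
    omega
  constructor
  · -- lower bound
    rw [hr]
    refine le_csInf ⟨ℓ, hℓmem⟩ ?_
    rintro i ⟨hiℓ, hi⟩
    by_contra h
    push_neg at h
    have hL1 : 1 ≤ L := by omega
    have hkLℓ : k ^ L ≤ ℓ := Nat.pow_log_le_self k (by omega)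
    have h2 : 2 ^ (ℓ - i) ≤ k ^ (ℓ - i) := Nat.pow_le_pow_left hk _
    have h3 : 2 ^ (ℓ - i) < 2 ^ (k ^ i) := by
      have h1 : 1 ≤ 2 ^ (k ^ i) := Nat.one_le_two_pow
      omega
    have h4 : ℓ - i < k ^ i :=
      (Nat.pow_lt_pow_iff_right (by norm_num)).mp h3
    have h5 : k ^ i ≤ k ^ (L - 1) := Nat.pow_le_pow_right (by omega) (by omega)
    have hLle : L ≤ 2 ^ (L - 1) := by
      have := Nat.lt_two_pow_self (n := L - 1)
      omega
    have h2k : 2 ^ (L - 1) ≤ k ^ (L - 1) := Nat.pow_le_pow_left hk _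
    have hpow : k ^ L = k ^ (L - 1) * k := by
      rw [← pow_succ]
      congr 1
      omega
    have h6 : L + k ^ (L - 1) ≤ k ^ L := by
      calc L + k ^ (L - 1) ≤ k ^ (L - 1) + k ^ (L - 1) := by omega
        _ = k ^ (L - 1) * 2 := by ring
        _ ≤ k ^ (L - 1) * k := Nat.mul_le_mul_left _ hk
        _ = k ^ L := hpow.symm
    omega
  · -- upper bound
    rcases le_or_gt ℓ (L + 2) with hle | hlt
    · have : r ≤ ℓ := by rw [hr]; exact Nat.sInf_le hℓmem
      omega
    · rw [hr]
      have hmem : L + 2 ∈ {i | i ≤ ℓ ∧ k ^ (ℓ - i) ≤ 2 ^ (k ^ i) - 1} := by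
        refine ⟨by omega, ?_⟩
        set m := ℓ - (L + 2) with hm
        have hℓlt : ℓ < k ^ (L + 1) := Nat.lt_pow_succ_log_self (by omega) ℓ
        have hmlt : m < k ^ (L + 1) := by omega
        have hkm : k * m + k ≤ k ^ (L + 2) := by
          calc k * m + k = k * (m + 1) := by ring
            _ ≤ k * k ^ (L + 1) := Nat.mul_le_mul_left _ (by omega)
            _ = k ^ (L + 2) := by ring
        have h1 : k ^ m ≤ 2 ^ (k * m) := by
          calc k ^ m ≤ (2 ^ k) ^ m := Nat.pow_le_pow_left (Nat.lt_two_pow_self (n := k)).le _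
            _ = 2 ^ (k * m) := by rw [← pow_mul]
        have h2 : 2 ^ (k * m) ≤ 2 ^ (k ^ (L + 2) - 1) :=
          Nat.pow_le_pow_right (by norm_num) (by omega)
        have h3 : 2 ^ (k ^ (L + 2) - 1) ≤ 2 ^ (k ^ (L + 2)) - 1 := by
          have hx : 1 ≤ k ^ (L + 2) := Nat.one_le_pow _ _ (by omega)
          have : 2 ^ (k ^ (L + 2)) = 2 ^ (k ^ (L + 2) - 1) * 2 := by
            rw [← pow_succ]; congr 1; omega
          have h1 : 1 ≤ 2 ^ (k ^ (L + 2) - 1) := Nat.one_le_two_pow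
          omega
        omega
      exact Nat.sInf_le hmem
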